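/- arXiv:1802.03337 — 2 statements merged into one kernel-verified Lean document; each statement's English description precedes it below -/
import Mathlib

section
/- Let S ∈ ℝ^{s×n} satisfy the subspace embedding property: for all x ∈ ℝ^d, (1−δ)‖Ax‖₂ ≤ ‖SAx‖₂ ≤ (1+δ)‖Ax‖₂ for some 0 < δ < 1, where A ∈ ℝ^{n×d} has rank d. Let SA = QR be a QR-decomposition with Q having orthonormal columns and R ∈ ℝ^{d×d} invertible. Then U = AR^{-1} satisfies: for all y ∈ ℝ^d, (1/(1+δ))‖y‖₂ ≤ ‖Uy‖₂ ≤ (1/(1−δ))‖y‖₂. -/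
open scoped BigOperators Matrix

/-- Euclidean norm of a vector in `ℝ^n`. -/
noncomputable def vecEnorm {n : ℕ} (v : Fin n → ℝ) : ℝ := Real.sqrt (∑ i, (v i) ^ 2)

/-- Frobenius norm of a matrix. -/
noncomputable def fnorm {n d : ℕ} (M : Matrix (Fin n) (Fin d) ℝ) : ℝ :=
  Real.sqrt (∑ i, ∑ j, (M i j) ^ 2)

lemma vecEnorm_orth {s d : ℕ} (Q : Matrix (Fin s) (Fin d) ℝ) (hQ : Qᵀ * Q = 1)
    (y : Fin d → ℝ) : vecEnorm (Q.mulVec y) = vecEnorm y := by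
  unfold vecEnorm
  congr 1
  have h : Q.mulVec y ⬝ᵥ Q.mulVec y = y ⬝ᵥ y := by
    rw [Matrix.dotProduct_mulVec]
    have : Matrix.vecMul (Q.mulVec y) Q = Matrix.mulVec (Qᵀ * Q) y := by
      rw [← Matrix.mulVec_transpose, Matrix.mulVec_mulVec]
    rw [this, hQ, Matrix.one_mulVec]
  simpa [dotProduct, sq] using h

/-- if `S` is a subspace embedding for the column space of `A`
(with distortion `δ`), `A` has rank `d`, and `SA = QR` with `QᵀQ = I` and `R`
invertible, then `U = AR⁻¹` satisfies
`(1/(1+δ))‖y‖ ≤ ‖Uy‖ ≤ (1/(1−δ))‖y‖` for all `y`. -/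
theorem preconditioned_basis_norm_bounds {n d s : ℕ}
    (A : Matrix (Fin n) (Fin d) ℝ) (hA : A.rank = d)
    (S : Matrix (Fin s) (Fin n) ℝ) (δ : ℝ) (hδ0 : 0 < δ) (hδ1 : δ < 1)
    (hembed : ∀ x : Fin d → ℝ,
      (1 - δ) * vecEnorm (A.mulVec x) ≤ vecEnorm ((S * A).mulVec x) ∧
      vecEnorm ((S * A).mulVec x) ≤ (1 + δ) * vecEnorm (A.mulVec x))
    (Q : Matrix (Fin s) (Fin d) ℝ) (R : Matrix (Fin d) (Fin d) ℝ)
    (hQ : Qᵀ * Q = 1) (hR : IsUnit R.det) (hQR : S * A = Q * R) :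
    ∀ y : Fin d → ℝ,
      (1 / (1 + δ)) * vecEnorm y ≤ vecEnorm ((A * R⁻¹).mulVec y) ∧
      vecEnorm ((A * R⁻¹).mulVec y) ≤ (1 / (1 - δ)) * vecEnorm y := by
  intro y
  set x := R⁻¹.mulVec y with hx
  have hAx : (A * R⁻¹).mulVec y = A.mulVec x := by
    rw [hx, Matrix.mulVec_mulVec]
  have hRx : R.mulVec x = y := by
    rw [hx, Matrix.mulVec_mulVec, Matrix.mul_nonsing_inv R hR, Matrix.one_mulVec]
  have hSAx : (S * A).mulVec x = Q.mulVec y := by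
    rw [hQR, ← Matrix.mulVec_mulVec, hRx]
  have hQy : vecEnorm ((S * A).mulVec x) = vecEnorm y := by
    rw [hSAx, vecEnorm_orth Q hQ]
  obtain ⟨h1, h2⟩ := hembed x
  rw [hQy] at h1 h2
  rw [hAx]
  have h1δ : (0:ℝ) < 1 + δ := by linarith
  have h2δ : (0:ℝ) < 1 - δ := by linarith
  constructor
  · rw [div_mul_eq_mul_div, div_le_iff₀ h1δ]
    linarith [h2]
  · rw [div_mul_eq_mul_div, le_div_iff₀ h2δ]
    linarith [h1]
end

section
/- Under the hypotheses of the previous statement, the matrix U = AR^{-1} is ((1+δ)/(1−δ) · √d, 1+δ, 2)-conditioned: ‖U‖_F ≤ √d/(1−δ) and σ_min(U) ≥ 1/(1+δ). -/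
open scoped BigOperators Matrix

/-- Euclidean norm of a vector in `ℝ^n`. -/
noncomputable def enorm {n : ℕ} (v : Fin n → ℝ) : ℝ := Real.sqrt (∑ i, (v i) ^ 2)

lemma enorm_nonneg' {n : ℕ} (v : Fin n → ℝ) : 0 ≤ _root_.enorm v := Real.sqrt_nonneg _

lemma enorm_sq' {n : ℕ} (v : Fin n → ℝ) : _root_.enorm v ^ 2 = ∑ i, v i ^ 2 :=
  Real.sq_sqrt (Finset.sum_nonneg fun i _ => sq_nonneg _)

lemma enorm_mulVec_orth {s d : ℕ} (Q : Matrix (Fin s) (Fin d) ℝ) (hQ : Qᵀ * Q = 1)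
    (v : Fin d → ℝ) : _root_.enorm (Q.mulVec v) = _root_.enorm v := by
  unfold _root_.enorm
  congr 1
  have h1 : ∑ i, (Q.mulVec v i) ^ 2 = Q.mulVec v ⬝ᵥ Q.mulVec v := by
    simp [dotProduct, sq]
  have h2 : ∑ i, (v i) ^ 2 = v ⬝ᵥ v := by simp [dotProduct, sq]
  rw [h1, h2, Matrix.dotProduct_mulVec, ← Matrix.mulVec_transpose,
    Matrix.mulVec_mulVec, hQ, Matrix.one_mulVec]

/-- under the hypotheses of Statement 1, `U = AR⁻¹` is
`((1+δ)/(1−δ)·√d, 1+δ, 2)`-conditioned: `‖U‖_F ≤ √d/(1−δ)` and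
`σ_min(U) ≥ 1/(1+δ)` (i.e. `(1+δ)‖Ux‖ ≥ ‖x‖` for all `x`). -/
theorem preconditioned_basis_isConditioned {n d s : ℕ}
    (A : Matrix (Fin n) (Fin d) ℝ) (hA : A.rank = d)
    (S : Matrix (Fin s) (Fin n) ℝ) (δ : ℝ) (hδ0 : 0 < δ) (hδ1 : δ < 1)
    (hembed : ∀ x : Fin d → ℝ,
      (1 - δ) * _root_.enorm (A.mulVec x) ≤ _root_.enorm ((S * A).mulVec x) ∧
      _root_.enorm ((S * A).mulVec x) ≤ (1 + δ) * _root_.enorm (A.mulVec x))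
    (Q : Matrix (Fin s) (Fin d) ℝ) (R : Matrix (Fin d) (Fin d) ℝ)
    (hQ : Qᵀ * Q = 1) (hR : IsUnit R.det) (hQR : S * A = Q * R) :
    fnorm (A * R⁻¹) ≤ Real.sqrt d / (1 - δ) ∧
    ∀ x : Fin d → ℝ, (1 / (1 + δ)) * _root_.enorm x ≤ _root_.enorm ((A * R⁻¹).mulVec x) := by
  have h1δ : (0:ℝ) < 1 - δ := by linarith
  have h2δ : (0:ℝ) < 1 + δ := by linarith
  have hRinv : R * R⁻¹ = 1 := Matrix.mul_nonsing_inv R hR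
  have key : ∀ x : Fin d → ℝ,
      (1 - δ) * _root_.enorm ((A * R⁻¹).mulVec x) ≤ _root_.enorm x ∧
      _root_.enorm x ≤ (1 + δ) * _root_.enorm ((A * R⁻¹).mulVec x) := by
    intro x
    have h1 : (A * R⁻¹).mulVec x = A.mulVec (R⁻¹.mulVec x) :=
      by rw [← Matrix.mulVec_mulVec]
    have h2 : (S * A).mulVec (R⁻¹.mulVec x) = Q.mulVec x := by
      have hq : Q * R * R⁻¹ = Q := by rw [Matrix.mul_assoc, hRinv, Matrix.mul_one]
      rw [hQR, Matrix.mulVec_mulVec, hq]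
    have h3 := hembed (R⁻¹.mulVec x)
    rw [h2, enorm_mulVec_orth Q hQ, ← h1] at h3
    exact ⟨h3.1, h3.2⟩
  constructor
  · -- Frobenius norm bound
    have hcol : ∀ j : Fin d,
        ∑ i, ((A * R⁻¹) i j) ^ 2 ≤ (1 / (1 - δ)) ^ 2 := by
      intro j
      have he : _root_.enorm ((Pi.single j 1 : Fin d → ℝ)) = 1 := by
        unfold _root_.enorm
        have : ∑ i : Fin d, ((Pi.single j 1 : Fin d → ℝ) i) ^ 2 = 1 := by
          simp [Pi.single_apply]
        rw [this, Real.sqrt_one]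
      have hcv : (A * R⁻¹).mulVec ((Pi.single j 1 : Fin d → ℝ)) = fun i => (A * R⁻¹) i j := by
        funext i
        simp [Matrix.mulVec_single]
      have h := (key ((Pi.single j 1 : Fin d → ℝ))).1
      rw [he] at h
      have hb : _root_.enorm ((A * R⁻¹).mulVec ((Pi.single j 1 : Fin d → ℝ))) ≤ 1 / (1 - δ) := by
        rw [le_div_iff₀ h1δ]; linarith
      have hnn : 0 ≤ _root_.enorm ((A * R⁻¹).mulVec ((Pi.single j 1 : Fin d → ℝ))) := enorm_nonneg' _
      have := pow_le_pow_left₀ hnn hb 2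
      rw [enorm_sq'] at this
      calc ∑ i, ((A * R⁻¹) i j) ^ 2
          = ∑ i, ((A * R⁻¹).mulVec ((Pi.single j 1 : Fin d → ℝ)) i) ^ 2 := by rw [hcv]
        _ ≤ (1 / (1 - δ)) ^ 2 := this
    have hsum : ∑ i, ∑ j, ((A * R⁻¹) i j) ^ 2 ≤ (d : ℝ) * (1 / (1 - δ)) ^ 2 := by
      rw [Finset.sum_comm]
      calc ∑ j : Fin d, ∑ i, ((A * R⁻¹) i j) ^ 2
          ≤ ∑ _j : Fin d, (1 / (1 - δ)) ^ 2 :=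
            Finset.sum_le_sum fun j _ => hcol j
        _ = (d : ℝ) * (1 / (1 - δ)) ^ 2 := by simp [mul_comm]
    unfold fnorm
    have := Real.sqrt_le_sqrt hsum
    calc Real.sqrt (∑ i, ∑ j, ((A * R⁻¹) i j) ^ 2)
        ≤ Real.sqrt ((d : ℝ) * (1 / (1 - δ)) ^ 2) := this
      _ = Real.sqrt d * (1 / (1 - δ)) := by
          rw [Real.sqrt_mul (Nat.cast_nonneg d),
            Real.sqrt_sq (by positivity : (0:ℝ) ≤ 1 / (1 - δ))]
      _ = Real.sqrt d / (1 - δ) := by ring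
  · intro x
    have h := (key x).2
    rw [one_div_mul_eq_div, div_le_iff₀ h2δ]
    linarith
end
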